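/- Suppose that for every unit vector α = (α_x,α_y,α_z) ∈ ℝ³ the lifted electromagnetic field tensor 𝓕 (with entries T₁₂, T₁₃, T₂₃, S₁₂, S₁₃, S₂₃ as in the context) satisfies assumption (a4): (∂T₁₂/∂T₃ − ∂S₁₂/∂z) − (∂T₁₃/∂T₂ − ∂S₁₃/∂y) + (∂T₂₃/∂T₁ − ∂S₂₃/∂x) = 0 at all points with T = tα, t > 0. Then the curl Maxwell equation ∇ × E = −∂B/∂t holds: ∂E_z/∂y − ∂E_y/∂z = −∂B_x/∂t, ∂E_x/∂z − ∂E_z/∂x = −∂B_y/∂t, and ∂E_y/∂x − ∂E_x/∂y = −∂B_z/∂t, for all X ∈ ℝ³ and t > 0. -/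

import Mathlib

open EuclideanSpace


open EuclideanSpace

local notation "E3" => EuclideanSpace ℝ (Fin 3)

lemma norm_deriv {α : E3} (hα : ‖α‖ = 1) {t : ℝ} (ht : 0 < t) :
    HasFDerivAt (fun y : E3 => ‖y‖) (innerSL ℝ α) (t • α) := by
  have hts : ‖t • α‖ = t := by
    rw [norm_smul, hα, mul_one, Real.norm_eq_abs, abs_of_pos ht]
  have h2 : HasFDerivAt (fun y : E3 => ‖y‖ ^ 2) (2 • innerSL ℝ (t • α)) (t • α) :=
    (hasStrictFDerivAt_norm_sq _).hasFDerivAt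
  have hne : ‖t • α‖ ^ 2 ≠ 0 := by rw [hts]; positivity
  have h3 := h2.sqrt hne
  have heq : (fun y : E3 => Real.sqrt (‖y‖ ^ 2)) = fun y : E3 => ‖y‖ := by
    funext y; rw [Real.sqrt_sq (norm_nonneg y)]
  rw [heq] at h3
  convert h3 using 1
  swap
  ext w
  simp only [ContinuousLinearMap.smul_apply, ContinuousLinearMap.coe_smul', Pi.smul_apply,
    innerSL_apply_apply, smul_eq_mul]
  rw [real_inner_smul_left, hts, Real.sqrt_sq ht.le]
  field_simp
  ring
  rfl

lemma key (f : E3 × ℝ → ℝ) (hf : ContDiff ℝ 1 f) (X α : E3) (hα : ‖α‖ = 1)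
    {t : ℝ} (ht : 0 < t) (u w : E3) :
    fderiv ℝ (fun p : E3 × E3 => f (p.1, ‖p.2‖)) (X, t • α) (u, w)
      = fderiv ℝ f (X, t) (u, (inner ℝ α w : ℝ)) := by
  have hts : ‖t • α‖ = t := by
    rw [norm_smul, hα, mul_one, Real.norm_eq_abs, abs_of_pos ht]
  have hg : HasFDerivAt (fun p : E3 × E3 => ((p.1, ‖p.2‖) : E3 × ℝ))
      ((ContinuousLinearMap.fst ℝ E3 E3).prod
        ((innerSL ℝ α).comp (ContinuousLinearMap.snd ℝ E3 E3))) (X, t • α) :=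
    HasFDerivAt.prodMk (hasFDerivAt_fst) ((norm_deriv hα ht).comp ((X, t • α) : E3 × E3) hasFDerivAt_snd)
  have hf' : HasFDerivAt f (fderiv ℝ f (X, t)) (X, ‖t • α‖) := by
    rw [hts]; exact (hf.differentiable one_ne_zero (X, t)).hasFDerivAt
  have hc := hf'.comp (X, t • α) hg
  have hd := hc.fderiv
  rw [Function.comp_def] at hd
  rw [hd]
  simp




open EuclideanSpace in
/-- If for every unit vector α the lifted electromagnetic field tensor, with entries
T₁₂ = B_z, T₁₃ = −B_y, T₂₃ = B_x, S₁₂ = α_x E_y − α_y E_x, S₁₃ = α_x E_z − α_z E_x,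
S₂₃ = α_y E_z − α_z E_y (lifted via t = |T|), satisfies assumption (a4):
(∂T₁₂/∂t_z − ∂S₁₂/∂z) − (∂T₁₃/∂t_y − ∂S₁₃/∂y) + (∂T₂₃/∂t_x − ∂S₂₃/∂x) = 0
at all points with T = tα, t > 0, then the curl Maxwell equation ∇ × E = −∂B/∂t
holds for all X and t > 0. -/
theorem curl_E_eq_neg_dB_dt_of_a4
    (E B : Fin 3 → EuclideanSpace ℝ (Fin 3) × ℝ → ℝ)
    (hE : ∀ i, ContDiff ℝ 1 (E i)) (hB : ∀ i, ContDiff ℝ 1 (B i))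
    (a4 : ∀ α : EuclideanSpace ℝ (Fin 3), ‖α‖ = 1 →
      ∀ (X : EuclideanSpace ℝ (Fin 3)) (t : ℝ), 0 < t →
        (fderiv ℝ (fun p : EuclideanSpace ℝ (Fin 3) × EuclideanSpace ℝ (Fin 3) =>
            B 2 (p.1, ‖p.2‖)) (X, t • α) (0, single 2 1) -
         fderiv ℝ (fun p : EuclideanSpace ℝ (Fin 3) × EuclideanSpace ℝ (Fin 3) =>
            α 0 * E 1 (p.1, ‖p.2‖) - α 1 * E 0 (p.1, ‖p.2‖)) (X, t • α) (single 2 1, 0)) -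
        (fderiv ℝ (fun p : EuclideanSpace ℝ (Fin 3) × EuclideanSpace ℝ (Fin 3) =>
            -B 1 (p.1, ‖p.2‖)) (X, t • α) (0, single 1 1) -
         fderiv ℝ (fun p : EuclideanSpace ℝ (Fin 3) × EuclideanSpace ℝ (Fin 3) =>
            α 0 * E 2 (p.1, ‖p.2‖) - α 2 * E 0 (p.1, ‖p.2‖)) (X, t • α) (single 1 1, 0)) +
        (fderiv ℝ (fun p : EuclideanSpace ℝ (Fin 3) × EuclideanSpace ℝ (Fin 3) =>
            B 0 (p.1, ‖p.2‖)) (X, t • α) (0, single 0 1) -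
         fderiv ℝ (fun p : EuclideanSpace ℝ (Fin 3) × EuclideanSpace ℝ (Fin 3) =>
            α 1 * E 2 (p.1, ‖p.2‖) - α 2 * E 1 (p.1, ‖p.2‖)) (X, t • α) (single 0 1, 0))
          = 0) :
    ∀ (X : EuclideanSpace ℝ (Fin 3)) (t : ℝ), 0 < t →
      (fderiv ℝ (E 2) (X, t) (single 1 1, 0) - fderiv ℝ (E 1) (X, t) (single 2 1, 0)
        = -fderiv ℝ (B 0) (X, t) (0, 1)) ∧
      (fderiv ℝ (E 0) (X, t) (single 2 1, 0) - fderiv ℝ (E 2) (X, t) (single 0 1, 0)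
        = -fderiv ℝ (B 1) (X, t) (0, 1)) ∧
      (fderiv ℝ (E 1) (X, t) (single 0 1, 0) - fderiv ℝ (E 0) (X, t) (single 1 1, 0)
        = -fderiv ℝ (B 2) (X, t) (0, 1)) := by
  
  intro X t ht
  have hcd : ∀ (a b : ℝ) (i j : Fin 3),
      ContDiff ℝ 1 (fun q : E3 × ℝ => a * E i q - b * E j q) := fun a b i j =>
    (contDiff_const.mul (hE i)).sub (contDiff_const.mul (hE j))
  refine ⟨?_, ?_, ?_⟩
  · have hα : ‖(single 0 1 : E3)‖ = 1 := by
      rw [EuclideanSpace.norm_single]; norm_num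
    have h := a4 (single 0 1) hα X t ht
    have e1 := key (B 2) (hB 2) X (single 0 1) hα ht 0 (single 2 1)
    have e2 := key (fun q => (single 0 1 : E3) 0 * E 1 q - (single 0 1 : E3) 1 * E 0 q)
      (hcd _ _ _ _) X (single 0 1) hα ht (single 2 1) 0
    have e3 := key (fun q => -B 1 q) (hB 1).neg X (single 0 1) hα ht 0 (single 1 1)
    have e4 := key (fun q => (single 0 1 : E3) 0 * E 2 q - (single 0 1 : E3) 2 * E 0 q)
      (hcd _ _ _ _) X (single 0 1) hα ht (single 1 1) 0
    have e5 := key (B 0) (hB 0) X (single 0 1) hα ht 0 (single 0 1)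
    have e6 := key (fun q => (single 0 1 : E3) 1 * E 2 q - (single 0 1 : E3) 2 * E 1 q)
      (hcd _ _ _ _) X (single 0 1) hα ht (single 0 1) 0
    simp only [e1, e2, e3, e4, e5, e6] at h
    simp only [EuclideanSpace.inner_single_left, EuclideanSpace.single_apply,
      inner_zero_right, conj_trivial, one_mul, zero_mul, sub_zero, zero_sub,
      if_true, if_false, Fin.isValue, mul_ite, mul_one, mul_zero] at h
    simp only [show ((0:Fin 3) = 1) = False from by decide,
      show ((0:Fin 3) = 2) = False from by decide, show ((1:Fin 3) = 0) = False from by decide,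
      show ((1:Fin 3) = 2) = False from by decide, show ((2:Fin 3) = 0) = False from by decide,
      show ((2:Fin 3) = 1) = False from by decide, if_true, if_false, ite_false, ite_true,
      one_mul, zero_mul, sub_zero, zero_sub, fderiv_neg, Prod.mk_zero_zero, map_zero,
      ContinuousLinearMap.neg_apply, neg_neg,
      show (fun q : E3 × ℝ => E 0 q) = E 0 from rfl, show (fun q : E3 × ℝ => E 1 q) = E 1 from rfl,
      show (fun q : E3 × ℝ => E 2 q) = E 2 from rfl, show (fun q : E3 × ℝ => B 0 q) = B 0 from rfl,
      show (fun q : E3 × ℝ => B 1 q) = B 1 from rfl, show (fun q : E3 × ℝ => B 2 q) = B 2 from rfl,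
      fderiv_const, fderiv_fun_neg, fderiv_const_apply, Pi.zero_apply,
      ContinuousLinearMap.zero_apply] at h
    linarith [h]
  · have hα : ‖(single 1 1 : E3)‖ = 1 := by
      rw [EuclideanSpace.norm_single]; norm_num
    have h := a4 (single 1 1) hα X t ht
    have e1 := key (B 2) (hB 2) X (single 1 1) hα ht 0 (single 2 1)
    have e2 := key (fun q => (single 1 1 : E3) 0 * E 1 q - (single 1 1 : E3) 1 * E 0 q)
      (hcd _ _ _ _) X (single 1 1) hα ht (single 2 1) 0
    have e3 := key (fun q => -B 1 q) (hB 1).neg X (single 1 1) hα ht 0 (single 1 1)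
    have e4 := key (fun q => (single 1 1 : E3) 0 * E 2 q - (single 1 1 : E3) 2 * E 0 q)
      (hcd _ _ _ _) X (single 1 1) hα ht (single 1 1) 0
    have e5 := key (B 0) (hB 0) X (single 1 1) hα ht 0 (single 0 1)
    have e6 := key (fun q => (single 1 1 : E3) 1 * E 2 q - (single 1 1 : E3) 2 * E 1 q)
      (hcd _ _ _ _) X (single 1 1) hα ht (single 0 1) 0
    simp only [e1, e2, e3, e4, e5, e6] at h
    simp only [EuclideanSpace.inner_single_left, EuclideanSpace.single_apply,
      inner_zero_right, conj_trivial, one_mul, zero_mul, sub_zero, zero_sub,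
      if_true, if_false, Fin.isValue, mul_ite, mul_one, mul_zero] at h
    simp only [show ((0:Fin 3) = 1) = False from by decide,
      show ((0:Fin 3) = 2) = False from by decide, show ((1:Fin 3) = 0) = False from by decide,
      show ((1:Fin 3) = 2) = False from by decide, show ((2:Fin 3) = 0) = False from by decide,
      show ((2:Fin 3) = 1) = False from by decide, if_true, if_false, ite_false, ite_true,
      one_mul, zero_mul, sub_zero, zero_sub, fderiv_neg, Prod.mk_zero_zero, map_zero,
      ContinuousLinearMap.neg_apply, neg_neg,
      show (fun q : E3 × ℝ => E 0 q) = E 0 from rfl, show (fun q : E3 × ℝ => E 1 q) = E 1 from rfl,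
      show (fun q : E3 × ℝ => E 2 q) = E 2 from rfl, show (fun q : E3 × ℝ => B 0 q) = B 0 from rfl,
      show (fun q : E3 × ℝ => B 1 q) = B 1 from rfl, show (fun q : E3 × ℝ => B 2 q) = B 2 from rfl,
      fderiv_const, fderiv_fun_neg, fderiv_const_apply, Pi.zero_apply,
      ContinuousLinearMap.zero_apply] at h
    linarith [h]
  · have hα : ‖(single 2 1 : E3)‖ = 1 := by
      rw [EuclideanSpace.norm_single]; norm_num
    have h := a4 (single 2 1) hα X t ht
    have e1 := key (B 2) (hB 2) X (single 2 1) hα ht 0 (single 2 1)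
    have e2 := key (fun q => (single 2 1 : E3) 0 * E 1 q - (single 2 1 : E3) 1 * E 0 q)
      (hcd _ _ _ _) X (single 2 1) hα ht (single 2 1) 0
    have e3 := key (fun q => -B 1 q) (hB 1).neg X (single 2 1) hα ht 0 (single 1 1)
    have e4 := key (fun q => (single 2 1 : E3) 0 * E 2 q - (single 2 1 : E3) 2 * E 0 q)
      (hcd _ _ _ _) X (single 2 1) hα ht (single 1 1) 0
    have e5 := key (B 0) (hB 0) X (single 2 1) hα ht 0 (single 0 1)
    have e6 := key (fun q => (single 2 1 : E3) 1 * E 2 q - (single 2 1 : E3) 2 * E 1 q)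
      (hcd _ _ _ _) X (single 2 1) hα ht (single 0 1) 0
    simp only [e1, e2, e3, e4, e5, e6] at h
    simp only [EuclideanSpace.inner_single_left, EuclideanSpace.single_apply,
      inner_zero_right, conj_trivial, one_mul, zero_mul, sub_zero, zero_sub,
      if_true, if_false, Fin.isValue, mul_ite, mul_one, mul_zero] at h
    simp only [show ((0:Fin 3) = 1) = False from by decide,
      show ((0:Fin 3) = 2) = False from by decide, show ((1:Fin 3) = 0) = False from by decide,
      show ((1:Fin 3) = 2) = False from by decide, show ((2:Fin 3) = 0) = False from by decide,
      show ((2:Fin 3) = 1) = False from by decide, if_true, if_false, ite_false, ite_true,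
      one_mul, zero_mul, sub_zero, zero_sub, fderiv_neg, Prod.mk_zero_zero, map_zero,
      ContinuousLinearMap.neg_apply, neg_neg,
      show (fun q : E3 × ℝ => E 0 q) = E 0 from rfl, show (fun q : E3 × ℝ => E 1 q) = E 1 from rfl,
      show (fun q : E3 × ℝ => E 2 q) = E 2 from rfl, show (fun q : E3 × ℝ => B 0 q) = B 0 from rfl,
      show (fun q : E3 × ℝ => B 1 q) = B 1 from rfl, show (fun q : E3 × ℝ => B 2 q) = B 2 from rfl,
      fderiv_const, fderiv_fun_neg, fderiv_const_apply, Pi.zero_apply,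
      ContinuousLinearMap.zero_apply] at h
    linarith [h]
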